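/- Let A be a proper connective dg algebra, d ≥ 1, and X ∈ D^fd(A)^{≤0}. For any n ∈ ℕ there exists P ∈ per(A)^{[-n,0]} := add(A) ∗ add(A)[1] ∗ ⋯ ∗ add(A)[n] such that t^{>-n}P ≅ t^{>-n}X. In particular, every X ∈ H^d := D^fd(A)^{≤0} ∩ D^fd(A)^{>-d} is isomorphic to t^{>-d}P for some P ∈ per(A)^{[-d,0]}. -/

import Mathlib

open CategoryTheory Category Limits Pretriangulated Triangulated ZeroObject

universe w v u

namespace Paper

section Defs

variable {C : Type u} [Category.{v} C] [Preadditive C] [HasZeroObject C]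
  [HasShift C ℤ] [∀ n : ℤ, (shiftFunctor C n).Additive] [Pretriangulated C]
  [HasFiniteBiproducts C] [HasBinaryBiproducts C]

/-- `X` lies in `add A`: it is a direct summand of a finite direct sum of copies of `A`. -/
def inAdd (A X : C) : Prop :=
  ∃ (n : ℕ) (s : X ⟶ ⨁ fun _ : Fin n => A) (p : (⨁ fun _ : Fin n => A) ⟶ X), s ≫ p = 𝟙 X

/-- The star operation `S ∗ T` on classes of objects of a (pre)triangulated category:
objects `E` admitting a distinguished triangle `X ⟶ E ⟶ Y ⟶ X⟦1⟧` with `X ∈ S`, `Y ∈ T`. -/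
def star (S T : Set C) : Set C :=
  {E | ∃ (X : C) (_ : X ∈ S) (Y : C) (_ : Y ∈ T) (f : X ⟶ E) (g : E ⟶ Y)
    (h : Y ⟶ X⟦(1 : ℤ)⟧), Triangle.mk f g h ∈ distTriang C}

/-- `add (A⟦i⟧)` as a class of objects. -/
def addShift (A : C) (i : ℤ) : Set C := {X | inAdd (A⟦i⟧) X}

/-- `per(A)^{[-n,0]} = add(A) ∗ add(A)[1] ∗ ⋯ ∗ add(A)[n]`. -/
def perInterval (A : C) : ℕ → Set C
  | 0 => addShift A 0
  | n + 1 => star (perInterval A n) (addShift A (n + 1))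

/-- `thick(DA)^{[0,n]} = add(DA)[-n] ∗ ⋯ ∗ add(DA)[-1] ∗ add(DA)`. -/
def coInterval (DA : C) : ℕ → Set C
  | 0 => addShift DA 0
  | n + 1 => star (addShift DA (-(n + 1 : ℕ))) (coInterval DA n)

/-- The extended heart `H^d = T^{≤ 0} ∩ T^{> -d}`. -/
def Hd (t : TStructure C) (d : ℕ) : Set C := {X | t.le 0 X ∧ t.ge (1 - (d : ℤ)) X}

/-- Projectivity in the extriangulated category given by an extension-closed class `S`:
`E(P, X) = Hom(P, X⟦1⟧)` vanishes for all `X ∈ S`. -/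
def projOn (S : Set C) (P : C) : Prop := ∀ X ∈ S, ∀ f : P ⟶ X⟦(1 : ℤ)⟧, f = 0

/-- Injectivity in the extriangulated category given by an extension-closed class `S`. -/
def injOn (S : Set C) (I : C) : Prop := ∀ X ∈ S, ∀ f : X ⟶ I⟦(1 : ℤ)⟧, f = 0

/-- `p : M ⟶ N` is a deflation for the extriangulated structure on the extension-closed
class `S`: it is the second map of a distinguished triangle with all terms in `S`. -/
def isDeflation (S : Set C) {M N : C} (p : M ⟶ N) : Prop :=
  ∃ (L : C) (_ : L ∈ S) (f : L ⟶ M) (h : N ⟶ L⟦(1 : ℤ)⟧),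
    Triangle.mk f p h ∈ distTriang C

/-- `i : L ⟶ M` is an inflation for the extriangulated structure on `S`. -/
def isInflation (S : Set C) {L M : C} (i : L ⟶ M) : Prop :=
  ∃ (N : C) (_ : N ∈ S) (p : M ⟶ N) (h : N ⟶ L⟦(1 : ℤ)⟧),
    Triangle.mk i p h ∈ distTriang C

/-- `f` factors through an object of `add W`. -/
def factorsThruAdd (W : C) {X Y : C} (f : X ⟶ Y) : Prop :=
  ∃ (Q : C) (_ : inAdd W Q) (a : X ⟶ Q) (b : Q ⟶ Y), f = a ≫ b

/-- An indecomposable object: nonzero, and in any direct sum decomposition one summand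
vanishes. -/
def Indec (X : C) : Prop :=
  ¬ IsZero X ∧ ∀ Y Z : C, Nonempty (X ≅ Y ⊞ Z) → IsZero Y ∨ IsZero Z

/-- Data of the truncation functor `t^{≥ n}`, left adjoint to the inclusion of `T^{≥ n}`,
together with its unit and the truncation triangles. -/
structure TruncGEData (t : TStructure C) (n : ℤ) where
  F : C ⥤ C
  η : 𝟭 C ⟶ F
  ge : ∀ X : C, t.ge n (F.obj X)
  tri : ∀ X : C, ∃ (Z : C) (_ : t.le (n - 1) Z) (f : Z ⟶ X) (h : F.obj X ⟶ Z⟦(1 : ℤ)⟧),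
    Triangle.mk f (η.app X) h ∈ distTriang C
  adj : ∀ (X W : C), t.ge n W → Function.Bijective (fun g : F.obj X ⟶ W => η.app X ≫ g)

/-- Data of the truncation functor `t^{≤ n}`, right adjoint to the inclusion of `T^{≤ n}`,
together with its counit and the truncation triangles. -/
structure TruncLEData (t : TStructure C) (n : ℤ) where
  F : C ⥤ C
  ε : F ⟶ 𝟭 C
  le : ∀ X : C, t.le n (F.obj X)
  tri : ∀ X : C, ∃ (Z : C) (_ : t.ge (n + 1) Z) (g : X ⟶ Z) (h : Z ⟶ (F.obj X)⟦(1 : ℤ)⟧),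
    Triangle.mk (ε.app X) g h ∈ distTriang C
  adj : ∀ (W X : C), t.le n W → Function.Bijective (fun g : W ⟶ F.obj X => g ≫ ε.app X)

/-- Membership in the thick subcategory generated by `A`. -/
inductive thickMem (A : C) : C → Prop
  | base : thickMem A A
  | zero : thickMem A 0
  | iso {X Y : C} : (X ≅ Y) → thickMem A X → thickMem A Y
  | shift (X : C) (n : ℤ) : thickMem A X → thickMem A (X⟦n⟧)
  | ext₂ {X Y Z : C} {f : X ⟶ Y} {g : Y ⟶ Z} {h : Z ⟶ X⟦(1 : ℤ)⟧} :
      (Triangle.mk f g h ∈ distTriang C) → thickMem A X → thickMem A Z → thickMem A Y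
  | smd {X Y : C} (s : X ⟶ Y) (p : Y ⟶ X) : s ≫ p = 𝟙 X → thickMem A Y → thickMem A X

end Defs

/-- Abstraction of the derived category `D^fd(A)` of a proper connective dg algebra `A`
over a field `k`, with its standard t-structure: `A` is connective (cohomology in
non-positive degrees), Hom-spaces are finite dimensional (properness), the standard
t-structure is bounded on `D^fd`, `A` is derived projective and `A` generates. -/
structure DGSetup (k : Type w) [Field k] (C : Type u) [Category.{v} C] [Preadditive C]
    [HasZeroObject C] [HasShift C ℤ] [∀ n : ℤ, (shiftFunctor C n).Additive]
    [Pretriangulated C] [Linear k C] where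
  t : TStructure C
  A : C
  connective : t.le 0 A
  homFinite : ∀ X Y : C, FiniteDimensional k (X ⟶ Y)
  bounded : ∀ X : C, ∃ a b : ℤ, t.ge a X ∧ t.le b X
  A_derived_projective : ∀ X : C, t.le 0 X → ∀ f : A ⟶ X⟦(1 : ℤ)⟧, f = 0
  generates : ∀ X : C, (∀ (n : ℤ) (f : A⟦n⟧ ⟶ X), f = 0) → IsZero X

section DG

variable {k : Type w} [Field k] {C : Type u} [Category.{v} C] [Preadditive C]
  [HasZeroObject C] [HasShift C ℤ] [∀ n : ℤ, (shiftFunctor C n).Additive]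
  [Pretriangulated C] [Linear k C]

/-- A derived injective object of `D^fd(A)^{≥ 0}`. -/
def DerivedInjective (S : DGSetup k C) (I : C) : Prop :=
  S.t.ge 0 I ∧ ∀ X : C, S.t.ge 0 X → ∀ f : X ⟶ I⟦(1 : ℤ)⟧, f = 0

variable [HasFiniteBiproducts C] [HasBinaryBiproducts C]

/-- The `k`-submodule of morphisms `X ⟶ Y` factoring through `add W`. -/
def addIdeal (k : Type w) [Field k] [Linear k C] (W : C) (X Y : C) : Submodule k (X ⟶ Y) :=
  Submodule.span k {f | factorsThruAdd W f}

end DG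

variable {C : Type u} [Category.{v} C] [Preadditive C] [HasZeroObject C]
  [HasShift C ℤ] [∀ n : ℤ, (shiftFunctor C n).Additive] [Pretriangulated C]
  [HasFiniteBiproducts C] [HasBinaryBiproducts C]
  {k : Type w} [Field k] [Linear k C]


section AuxProofs

variable (t : TStructure C)

lemma zero_orth {X Y : C} (f : X ⟶ Y) {a b : ℤ} (hX : t.le a X) (hY : t.ge b Y)
    (hab : a < b) : f = 0 := by
  have hX' : t.le 0 (X⟦a⟧) := t.le_shift a a 0 (by omega) X hX
  have hY' : t.ge (b - a) (Y⟦a⟧) := t.ge_shift b a (b - a) (by omega) Y hY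
  have hY'' : t.ge 1 (Y⟦a⟧) := t.ge_antitone (show (1:ℤ) ≤ b - a by omega) _ hY'
  have hz : f⟦a⟧' = 0 := t.zero' _ hX' hY''
  apply (shiftFunctor C a).map_injective
  rw [hz, CategoryTheory.Functor.map_zero]

lemma le_iff_orth (n : ℤ) (X : C) :
    t.le n X ↔ ∀ (Y : C), t.ge (n + 1) Y → ∀ f : X ⟶ Y, f = 0 := by
  constructor
  · intro hX Y hY f
    exact zero_orth t f hX hY (by omega)
  · intro h
    obtain ⟨X₀, Y₀, hX₀, hY₀, f, g, co, mem⟩ := t.exists_triangle X n (n + 1) rfl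
    have hg : g = 0 := h _ hY₀ g
    have h1 : IsZero Y₀ := by
      rw [IsZero.iff_id_eq_zero]
      obtain ⟨u, hu⟩ := Triangle.yoneda_exact₂ _ (rot_of_distTriang _ mem) (𝟙 Y₀)
        (by show g ≫ 𝟙 Y₀ = 0; rw [hg, zero_comp])
      have hu' : 𝟙 Y₀ = co ≫ u := hu
      have hu0 : u = 0 :=
        zero_orth t u (t.le_shift n 1 (n - 1) (by omega) X₀ hX₀) hY₀ (by omega)
      erw [hu', hu0, comp_zero]
    have : IsIso f := (Triangle.isZero₃_iff_isIso₁ _ mem).1 h1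
    exact (t.le n).prop_of_iso (asIso f) hX₀

lemma le_ext₂ {T : Triangle C} (hT : T ∈ distTriang C) {n : ℤ}
    (h₁ : t.le n T.obj₁) (h₃ : t.le n T.obj₃) : t.le n T.obj₂ := by
  rw [le_iff_orth]
  intro Y hY f
  obtain ⟨g, hg⟩ := Triangle.yoneda_exact₂ _ hT f (zero_orth t _ h₁ hY (by omega))
  rw [hg, zero_orth t g h₃ hY (by omega), comp_zero]

lemma le_biproduct {n : ℤ} {m : ℕ} (X : Fin m → C) (hX : ∀ i, t.le n (X i)) :
    t.le n (⨁ X) := by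
  rw [le_iff_orth]
  intro Y hY f
  apply biproduct.hom_ext'
  intro i
  rw [comp_zero, zero_orth t (biproduct.ι X i ≫ f) (hX i) hY (by omega)]

variable (S : DGSetup k C)

lemma projA {V : C} (hV : S.t.le (-1) V) (f : S.A ⟶ V) : f = 0 := by
  have h0 : f ≫ ((shiftEquiv C (1 : ℤ)).counitIso.app V).inv = 0 :=
    S.A_derived_projective (V⟦(-1 : ℤ)⟧) (S.t.le_shift (-1) (-1) 0 (by omega) V hV) _
  have : f = (f ≫ ((shiftEquiv C (1 : ℤ)).counitIso.app V).inv) ≫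
      ((shiftEquiv C (1 : ℤ)).counitIso.app V).hom := by
    rw [assoc, Iso.inv_hom_id, comp_id]
  rw [this, h0, zero_comp]

lemma vanish (j : ℤ) {V : C} (hV : S.t.le (-j - 1) V) (f : S.A⟦j⟧ ⟶ V) : f = 0 := by
  have hV' : S.t.le (-1) (V⟦-j⟧) := S.t.le_shift (-j - 1) (-j) (-1) (by omega) V hV
  have h0 : (shiftEquiv C j).unitIso.hom.app S.A ≫ f⟦-j⟧' = 0 := projA S hV' _
  have h1 : f⟦-j⟧' = 0 := by
    have h2 := congrArg (fun g => (shiftEquiv C j).unitIso.inv.app S.A ≫ g) h0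
    exact (Iso.cancel_iso_hom_left ((shiftEquiv C j).unitIso.app S.A) _ _).1 (h0.trans comp_zero.symm)
  apply (shiftFunctor C (-j)).map_injective
  rw [h1, CategoryTheory.Functor.map_zero]

lemma det0 (T1 : TruncGEData S.t 0) {Z : C} (hZ : S.t.le 0 Z)
    (h : ∀ f : S.A ⟶ Z, f = 0) : S.t.le (-1) Z := by
  obtain ⟨Z', hZ', u, δ, mem⟩ := T1.tri Z
  have hZ'1 : S.t.le (-1) Z' := by rwa [show (0 : ℤ) - 1 = -1 by norm_num] at hZ'
  have hFle : S.t.le 0 (T1.F.obj Z) := by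
    apply le_ext₂ S.t (rot_of_distTriang _ mem) hZ
    exact S.t.le_monotone (show (-2 : ℤ) ≤ 0 by omega) _
      (S.t.le_shift (-1) 1 (-2) (by omega) Z' hZ'1)
  have hzero : IsZero (T1.F.obj Z) := by
    apply S.generates
    intro mm f
    rcases lt_trichotomy mm 0 with hm | hm | hm
    · exact vanish S mm (S.t.le_monotone (by omega) _ hFle) f
    · subst hm
      have hf0 : ((shiftFunctorZero C ℤ).inv.app S.A ≫ f) ≫ δ = 0 :=
        S.A_derived_projective Z' (S.t.le_monotone (by omega) _ hZ'1) _
      obtain ⟨g, hg⟩ := Triangle.coyoneda_exact₃ _ mem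
        ((shiftFunctorZero C ℤ).inv.app S.A ≫ f) hf0
      have hg' : (shiftFunctorZero C ℤ).inv.app S.A ≫ f = g ≫ T1.η.app Z := hg
      have hf1 : (shiftFunctorZero C ℤ).inv.app S.A ≫ f = 0 := by
        erw [hg', h g, zero_comp]
      have := congrArg (fun q => (shiftFunctorZero C ℤ).hom.app S.A ≫ q) hf1
      simpa using this
    · exact zero_orth S.t f (S.t.le_shift 0 mm (-mm) (by omega) S.A S.connective)
        (T1.ge Z) (by omega)
  have : IsIso u := (Triangle.isZero₃_iff_isIso₁ _ mem).1 hzero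
  exact (S.t.le (-1)).prop_of_iso (asIso u) hZ'1

lemma detShift (T1 : TruncGEData S.t 0) (i : ℤ) {Z : C} (hZ : S.t.le (-i) Z)
    (h : ∀ f : S.A⟦i⟧ ⟶ Z, f = 0) : S.t.le (-i - 1) Z := by
  have h1 : S.t.le (-1) (Z⟦-i⟧) := by
    apply det0 S T1 (S.t.le_shift (-i) (-i) 0 (by omega) Z hZ)
    intro g
    have h2 : g⟦i⟧' ≫ ((shiftEquiv C i).counitIso.app Z).hom = 0 :=
      h (g⟦i⟧' ≫ ((shiftEquiv C i).counitIso.app Z).hom)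
    have h3 : g⟦i⟧' = 0 := by
      have h4 := congrArg (fun q => q ≫ ((shiftEquiv C i).counitIso.app Z).inv) h2
      exact (Iso.cancel_iso_hom_right _ _ ((shiftEquiv C i).counitIso.app Z)).1 (h2.trans zero_comp.symm)
    apply (shiftFunctor C i).map_injective
    rw [h3, CategoryTheory.Functor.map_zero]
  have h5 : S.t.le (-1 - i) ((Z⟦-i⟧)⟦i⟧) := S.t.le_shift (-1) i (-1 - i) (by omega) _ h1
  have h6 := (S.t.le (-1 - i)).prop_of_iso ((shiftEquiv C i).counitIso.app Z) h5
  rwa [show (-1 - i : ℤ) = -i - 1 by ring] at h6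

lemma coverShift (T1 : TruncGEData S.t 0) (i : ℤ) (Y : C) (hY : S.t.le (-i) Y) :
    ∃ (Q : C) (_ : inAdd (S.A⟦i⟧) Q) (_ : S.t.le (-i) Q) (q : Q ⟶ Y) (Z : C)
      (_ : S.t.le (-i - 1) Z) (z : Y ⟶ Z) (δ : Z ⟶ Q⟦(1 : ℤ)⟧),
      Triangle.mk q z δ ∈ distTriang C := by
  have hY' : S.t.le 0 (Y⟦-i⟧) := S.t.le_shift (-i) (-i) 0 (by omega) Y hY
  letI : FiniteDimensional k (S.A ⟶ Y⟦(-i : ℤ)⟧) := S.homFinite _ _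
  set m := Module.finrank k (S.A ⟶ Y⟦(-i : ℤ)⟧) with hm
  let bb : Module.Basis (Fin m) k (S.A ⟶ Y⟦(-i : ℤ)⟧) := Module.finBasis k _
  have hQ₀ : S.t.le 0 (⨁ (fun _ : Fin m => S.A)) :=
    le_biproduct S.t _ (fun _ => S.connective)
  obtain ⟨Z₀, z₀, δ₀, mem₀⟩ :=
    distinguished_cocone_triangle (biproduct.desc (fun j => bb j) : _ ⟶ Y⟦(-i : ℤ)⟧)
  have hZ₀le0 : S.t.le 0 Z₀ := by
    apply le_ext₂ S.t (rot_of_distTriang _ mem₀) hY'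
    exact S.t.le_monotone (show (-1 : ℤ) ≤ 0 by omega) _
      (S.t.le_shift 0 1 (-1) (by omega) _ hQ₀)
  have hzc : ∀ g : S.A ⟶ Y⟦(-i : ℤ)⟧, g ≫ z₀ = 0 := by
    intro g
    rw [← bb.sum_repr g, Preadditive.sum_comp]
    apply Finset.sum_eq_zero
    intro j _
    rw [Linear.smul_comp]
    have hb : bb j ≫ z₀ = 0 := by
      have hdz : (biproduct.desc (fun j => bb j) : _ ⟶ Y⟦(-i : ℤ)⟧) ≫ z₀ = 0 :=
        comp_distTriang_mor_zero₁₂ _ mem₀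
      rw [show bb j = biproduct.ι (fun _ : Fin m => S.A) j ≫
            biproduct.desc (fun j => bb j) by rw [biproduct.ι_desc],
        assoc, hdz, comp_zero]
    rw [hb, smul_zero]
  have hZ₀ : S.t.le (-1) Z₀ := by
    apply det0 S T1 hZ₀le0
    intro f
    have h1 : f ≫ δ₀ = 0 := S.A_derived_projective _ hQ₀ _
    obtain ⟨g, hg⟩ := Triangle.coyoneda_exact₃ _ mem₀ f h1
    have hg' : f = g ≫ z₀ := hg
    erw [hg', hzc g]
  have memsh := Triangle.shift_distinguished _ mem₀ i
  have memfin : Triangle.mk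
      (((Triangle.shiftFunctor C i).obj (Triangle.mk (biproduct.desc (fun j => bb j)) z₀ δ₀)).mor₁ ≫
        ((shiftEquiv C i).counitIso.app Y).hom)
      (((shiftEquiv C i).counitIso.app Y).inv ≫
        ((Triangle.shiftFunctor C i).obj (Triangle.mk (biproduct.desc (fun j => bb j)) z₀ δ₀)).mor₂)
      (((Triangle.shiftFunctor C i).obj (Triangle.mk (biproduct.desc (fun j => bb j)) z₀ δ₀)).mor₃)
      ∈ distTriang C := by
    refine isomorphic_distinguished _ memsh _ ?_
    refine Triangle.isoMk _ _ (Iso.refl _) ((shiftEquiv C i).counitIso.app Y).symm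
      (Iso.refl _) ((assoc _ _ _).trans ((whisker_eq _ (Iso.hom_inv_id ((shiftEquiv C i).counitIso.app Y))).trans ((comp_id _).trans (id_comp _).symm)))
      ((comp_id _).trans rfl) ((whisker_eq _ (CategoryTheory.Functor.map_id _ _)).trans ((comp_id _).trans (id_comp _).symm))
  have hadd : inAdd (S.A⟦i⟧) ((⨁ (fun _ : Fin m => S.A))⟦i⟧) := by
    refine ⟨m, biproduct.lift (fun j => (biproduct.π (fun _ : Fin m => S.A) j)⟦i⟧'),
      biproduct.desc (fun j => (biproduct.ι (fun _ : Fin m => S.A) j)⟦i⟧'), ?_⟩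
    rw [biproduct.lift_desc]
    have he : ∀ j : Fin m,
        (biproduct.π (fun _ : Fin m => S.A) j)⟦i⟧' ≫ (biproduct.ι (fun _ : Fin m => S.A) j)⟦i⟧'
          = ((biproduct.π (fun _ : Fin m => S.A) j ≫ biproduct.ι (fun _ : Fin m => S.A) j))⟦i⟧' :=
      fun j => ((shiftFunctor C i).map_comp _ _).symm
    rw [Finset.sum_congr rfl (fun j _ => he j), ← CategoryTheory.Functor.map_sum, biproduct.total,
      CategoryTheory.Functor.map_id]
  have hQle : S.t.le (-i) ((⨁ (fun _ : Fin m => S.A))⟦i⟧) :=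
    S.t.le_shift 0 i (-i) (by omega) _ hQ₀
  have hZle : S.t.le (-i - 1) (Z₀⟦i⟧) := by
    have := S.t.le_shift (-1) i (-1 - i) (by omega) _ hZ₀
    rwa [show (-1 - i : ℤ) = -i - 1 by ring] at this
  exact ⟨_, hadd, hQle, _, _, hZle, _, _, memfin⟩

lemma keyApprox (S : DGSetup k C) (T1 : TruncGEData S.t 0) (n : ℕ) :
    ∀ (X : C), S.t.le 0 X → ∃ (P : C) (_ : P ∈ perInterval S.A n) (_ : S.t.le 0 P)
      (φ : P ⟶ X) (D : C) (_ : S.t.le (-(n : ℤ) - 1) D) (c : X ⟶ D) (δ : D ⟶ P⟦(1 : ℤ)⟧),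
      Triangle.mk φ c δ ∈ distTriang C := by
  induction n with
  | zero =>
    intro X hX
    obtain ⟨Q, hadd, hQle, q, Z, hZ, z, δ, mem⟩ :=
      coverShift S T1 0 X (by simpa using hX)
    exact ⟨Q, hadd, by simpa using hQle, q, Z, by simpa using hZ, z, δ, mem⟩
  | succ n ih =>
    intro X hX
    obtain ⟨Pn, hPn, hPnle, φn, C0, hC0, cX, pd, memT2⟩ := ih X hX
    have hC0' : S.t.le (-((n : ℤ) + 1)) C0 := by
      rwa [show (-((n : ℤ) + 1)) = -(n : ℤ) - 1 by ring]
    obtain ⟨Q, hQadd, hQle, q, Z, hZle, z, δ3, memT3⟩ :=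
      coverShift S T1 ((n : ℤ) + 1) C0 hC0'
    obtain ⟨Pp, a, b, memT1⟩ := distinguished_cocone_triangle₂ (q ≫ pd)
    obtain ⟨φ0, hφ10, hφ20⟩ := complete_distinguished_triangle_morphism₂
      (Triangle.mk a b (q ≫ pd)) (Triangle.mk φn cX pd) memT1 memT2 (𝟙 Pn) q
      (by show (q ≫ pd) ≫ (𝟙 Pn)⟦(1 : ℤ)⟧' = q ≫ pd
          rw [CategoryTheory.Functor.map_id, Category.comp_id])
    let φ : Pp ⟶ X := φ0
    have hφ1' : a ≫ φ = φn := by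
      have h' : a ≫ φ0 = 𝟙 Pn ≫ φn := hφ10
      rwa [Category.id_comp] at h'
    have hφ2' : b ≫ q = φ ≫ cX := hφ20
    obtain ⟨D, cD, δ4, memT4⟩ := distinguished_cocone_triangle φ
    have hPple : S.t.le 0 Pp :=
      le_ext₂ S.t memT1 hPnle (S.t.le_monotone (by omega) _ hQle)
    have hDle0 : S.t.le 0 D := by
      apply le_ext₂ S.t (rot_of_distTriang _ memT4) hX
      exact S.t.le_monotone (show (-1 : ℤ) ≤ 0 by omega) _
        (S.t.le_shift 0 1 (-1) (by omega) _ hPple)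
    -- injectivity at shifted level
    have hker : ∀ (j : ℤ), j ≤ (n : ℤ) + 1 → ∀ g : S.A⟦j⟧ ⟶ Pp⟦(1 : ℤ)⟧,
        g ≫ φ⟦(1 : ℤ)⟧' = 0 → g = 0 := by
      intro j hj g hg
      have h1 : (g ≫ b⟦(1 : ℤ)⟧') ≫ q⟦(1 : ℤ)⟧' = 0 := by
        rw [assoc, ← CategoryTheory.Functor.map_comp, hφ2', CategoryTheory.Functor.map_comp, ← assoc, hg, zero_comp]
      obtain ⟨u, hu⟩ := Triangle.coyoneda_exact₂ _
        (rot_of_distTriang _ (rot_of_distTriang _ memT3)) (g ≫ b⟦(1 : ℤ)⟧')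
        (by show (g ≫ b⟦(1 : ℤ)⟧') ≫ (-(q⟦(1 : ℤ)⟧')) = 0; rw [Preadditive.comp_neg, h1, neg_zero])
      have hu0 : u = 0 := vanish S j (S.t.le_monotone (by omega) _ hZle) u
      have hgb : g ≫ b⟦(1 : ℤ)⟧' = 0 := by erw [hu, hu0, zero_comp]; rfl
      obtain ⟨r, hr⟩ := Triangle.coyoneda_exact₂ _
        (rot_of_distTriang _ (rot_of_distTriang _ (rot_of_distTriang _ memT1))) g
        (by show g ≫ (-(b⟦(1 : ℤ)⟧')) = 0; rw [Preadditive.comp_neg, hgb, neg_zero])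
      have hr' : g = r ≫ (-(a⟦(1 : ℤ)⟧')) := hr
      have hr'' : g = -(r ≫ a⟦(1 : ℤ)⟧') := by erw [hr', Preadditive.comp_neg]; rfl
      have hrφ : r ≫ φn⟦(1 : ℤ)⟧' = 0 := by
        rw [hr''] at hg
        erw [Preadditive.neg_comp, assoc, ← CategoryTheory.Functor.map_comp, hφ1'] at hg
        exact neg_eq_zero.mp hg
      obtain ⟨e, he⟩ := Triangle.coyoneda_exact₂ _
        (rot_of_distTriang _ (rot_of_distTriang _ memT2)) r
        (by show r ≫ (-(φn⟦(1 : ℤ)⟧')) = 0; erw [Preadditive.comp_neg, hrφ, neg_zero])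
      have he' : r = e ≫ pd := he
      obtain ⟨u', hu2⟩ := Triangle.coyoneda_exact₂ _ memT3 e
        (vanish S j (S.t.le_monotone (by omega) _ hZle) _)
      have hu2' : e = u' ≫ q := hu2
      have hzero31 : q ≫ pd ≫ a⟦(1 : ℤ)⟧' = 0 := by
        rw [← assoc]; exact comp_distTriang_mor_zero₃₁ _ memT1
      have hra : r ≫ a⟦(1 : ℤ)⟧' = 0 := by
        erw [he', hu2', assoc, assoc, hzero31, comp_zero]
      rw [hr'', hra, neg_zero]
    -- vanishing of maps from A⟦j⟧ to D
    have hvan : ∀ (j : ℤ), j ≤ (n : ℤ) + 1 → ∀ f : S.A⟦j⟧ ⟶ D, f = 0 := by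
      intro j hj f
      have hz31T4 : δ4 ≫ φ⟦(1 : ℤ)⟧' = 0 := comp_distTriang_mor_zero₃₁ _ memT4
      have h1 : f ≫ δ4 = 0 := by
        apply hker j hj
        rw [assoc, hz31T4, comp_zero]
      obtain ⟨s0, hs⟩ := Triangle.coyoneda_exact₃ _ memT4 f h1
      let s : S.A⟦j⟧ ⟶ X := s0
      have hs' : f = s ≫ cD := hs
      obtain ⟨u, hu⟩ := Triangle.coyoneda_exact₂ _ memT3 (s ≫ cX)
        (vanish S j (S.t.le_monotone (by omega) _ hZle) _)
      have hu' : s ≫ cX = u ≫ q := hu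
      have h23T2 : cX ≫ pd = 0 := comp_distTriang_mor_zero₂₃ _ memT2
      have huw : u ≫ (q ≫ pd) = 0 := by
        erw [← assoc, ← hu', assoc, h23T2, comp_zero]
      obtain ⟨v0, hv⟩ := Triangle.coyoneda_exact₃ _ memT1 u huw
      let v : S.A⟦j⟧ ⟶ Pp := v0
      have hv' : u = v ≫ b := hv
      have hfac : (s - v ≫ φ) ≫ cX = 0 := by
        erw [Preadditive.sub_comp, assoc, ← hφ2', ← assoc, ← hv', ← hu', sub_self]
      obtain ⟨r, hr2⟩ := Triangle.coyoneda_exact₂ _ memT2 (s - v ≫ φ) hfac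
      have hr2' : s - v ≫ φ = r ≫ φn := hr2
      have hsfin : s = (v + r ≫ a) ≫ φ := by
        have h2 : (r ≫ a) ≫ φ = s - v ≫ φ := by erw [assoc, hφ1']; exact hr2'.symm
        rw [Preadditive.add_comp, h2]; abel
      have h12T4 : φ ≫ cD = 0 := comp_distTriang_mor_zero₁₂ _ memT4
      rw [hs', hsfin, assoc, h12T4, comp_zero]
    -- conclude D has the right connectivity
    have hDfin : ∀ i : ℕ, (i : ℤ) ≤ (n : ℤ) + 2 → S.t.le (-(i : ℤ)) D := by
      intro i
      induction i with
      | zero => intro _; simpa using hDle0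
      | succ i ihi =>
        intro hi
        have h1 := detShift S T1 (i : ℤ)
          (ihi (by push_cast at hi ⊢; omega)) (hvan (i : ℤ) (by push_cast at hi; omega))
        rwa [show (-((i : ℕ) : ℤ) - 1) = -(((i + 1 : ℕ)) : ℤ) by push_cast; ring] at h1
    have hDD : S.t.le (-((n : ℤ) + 1) - 1) D := by
      have h2 := hDfin (n + 2) (by push_cast; omega)
      rwa [show (-(((n + 2 : ℕ)) : ℤ)) = -((n : ℤ) + 1) - 1 by push_cast; ring] at h2
    refine ⟨Pp, ⟨Pn, hPn, Q, hQadd, a, b, q ≫ pd, memT1⟩, hPple, φ, D, ?_, cD, δ4, memT4⟩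
    rwa [show (-(((n + 1 : ℕ)) : ℤ) - 1) = -((n : ℤ) + 1) - 1 by push_cast; ring]

lemma isoTrunc (S : DGSetup k C) {n : ℤ} (Tn : TruncGEData S.t (1 - n))
    {P X D : C} (φ : P ⟶ X) (c : X ⟶ D) (δ : D ⟶ P⟦(1 : ℤ)⟧)
    (hT : Triangle.mk φ c δ ∈ distTriang C) (hD : S.t.le (-n - 1) D) :
    Nonempty (Tn.F.obj P ≅ Tn.F.obj X) := by
  have bij : ∀ (W : C), S.t.ge (1 - n) W →
      Function.Bijective (fun f : X ⟶ W => φ ≫ f) := by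
    intro W hW
    constructor
    · intro f g hfg
      have hfg' : φ ≫ f = φ ≫ g := hfg
      have h0 : φ ≫ (f - g) = 0 := by rw [Preadditive.comp_sub, hfg', sub_self]
      obtain ⟨w', hw'⟩ := Triangle.yoneda_exact₂ _ hT (f - g) h0
      have hw0 : w' = 0 := zero_orth S.t w' hD hW (by omega)
      have : f - g = 0 := by
        have hw'' : f - g = c ≫ w' := hw'
        erw [hw'', hw0, comp_zero]
      exact sub_eq_zero.mp this
    · intro g
      have hD1 : S.t.le (-n) (D⟦(-1 : ℤ)⟧) := S.t.le_shift (-n - 1) (-1) (-n) (by omega) D hD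
      have h0 : (Triangle.mk φ c δ).invRotate.mor₁ ≫ g = 0 :=
        zero_orth S.t _ hD1 hW (by omega)
      obtain ⟨f, hf⟩ := Triangle.yoneda_exact₂ _ (inv_rot_of_distTriang _ hT) g h0
      exact ⟨f, hf.symm⟩
  obtain ⟨mm, hm⟩ := (bij _ (Tn.ge P)).2 (Tn.η.app P)
  have hm' : φ ≫ mm = Tn.η.app P := hm
  obtain ⟨α, hα⟩ := (Tn.adj P (Tn.F.obj X) (Tn.ge X)).2 (φ ≫ Tn.η.app X)
  have hα' : Tn.η.app P ≫ α = φ ≫ Tn.η.app X := hα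
  obtain ⟨β, hβ⟩ := (Tn.adj X (Tn.F.obj P) (Tn.ge P)).2 mm
  have hβ' : Tn.η.app X ≫ β = mm := hβ
  refine ⟨⟨α, β, ?_, ?_⟩⟩
  · apply (Tn.adj P (Tn.F.obj P) (Tn.ge P)).1
    show Tn.η.app P ≫ (α ≫ β) = Tn.η.app P ≫ 𝟙 _
    rw [← assoc, hα', assoc, hβ', hm', comp_id]
  · apply (Tn.adj X (Tn.F.obj X) (Tn.ge X)).1
    show Tn.η.app X ≫ (β ≫ α) = Tn.η.app X ≫ 𝟙 _
    have h1 : mm ≫ α = Tn.η.app X := by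
      apply (bij _ (Tn.ge X)).1
      show φ ≫ (mm ≫ α) = φ ≫ Tn.η.app X
      rw [← assoc, hm', hα']
    rw [← assoc, hβ', h1, comp_id]

end AuxProofs

/-- For every `n` and `X ∈ D^fd(A)^{≤0}` there is
`P ∈ per(A)^{[-n,0]}` with `t^{>-n} P ≅ t^{>-n} X`; in particular every
`X ∈ H^d` is isomorphic to `t^{>-d} P` for some `P ∈ per(A)^{[-d,0]}`. -/
theorem stmt10 (S : DGSetup k C) (T : ∀ n : ℕ, TruncGEData S.t (1 - (n : ℤ))) :
    (∀ (n : ℕ) (X : C), S.t.le 0 X →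
      ∃ P ∈ perInterval S.A n, Nonempty ((T n).F.obj P ≅ (T n).F.obj X)) ∧
    (∀ d : ℕ, 1 ≤ d → S.A ∈ Hd S.t d → ∀ X ∈ Hd S.t d,
      ∃ P ∈ perInterval S.A d, Nonempty ((T d).F.obj P ≅ X)) := by
  have T1 : TruncGEData S.t 0 := by
    have h : (1 - ((1 : ℕ) : ℤ)) = 0 := by norm_num
    exact h ▸ T 1
  constructor
  · intro n X hX
    obtain ⟨P, hP, -, φ, D, hD, c, δ, mem⟩ := keyApprox S T1 n X hX
    exact ⟨P, hP, isoTrunc S (T n) φ c δ mem hD⟩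
  · intro d _hd _hA X hX
    obtain ⟨P, hP, -, φ, D, hD, c, δ, mem⟩ := keyApprox S T1 d X hX.1
    obtain ⟨e⟩ := isoTrunc S (T d) φ c δ mem hD
    obtain ⟨ρ, hρ⟩ := ((T d).adj X X hX.2).2 (𝟙 X)
    have hρ' : (T d).η.app X ≫ ρ = 𝟙 X := hρ
    have hηρ : ρ ≫ (T d).η.app X = 𝟙 _ := by
      apply ((T d).adj X ((T d).F.obj X) ((T d).ge X)).1
      show (T d).η.app X ≫ (ρ ≫ (T d).η.app X) = (T d).η.app X ≫ 𝟙 _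
      rw [← assoc, hρ']
      simp
    exact ⟨P, hP, ⟨e.trans (Iso.mk ρ ((T d).η.app X) hηρ hρ')⟩⟩

end Paper
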